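/- Let β, N₀, κ, P, M, ν > 0 and μ, D₀, η ≥ 0 be real numbers. The function EE(B) = B·log₂(1 + MPβ/(BN₀)) / (P/κ + μ + (D₀ + νB)M + ηB·log₂(1 + MPβ/(BN₀))) on the domain B > 0 attains its maximum at a unique point B_opt > 0; that is, there exists a unique B_opt > 0 such that EE(B_opt) ≥ EE(B) for all B > 0. -/

import Mathlib

/-- The energy efficiency as a function of the bandwidth `B`, for a fixed transmit power
`P` and number of antennas `M`. -/
noncomputable def EE8 (β N₀ κ P M μ D₀ ν η B : ℝ) : ℝ :=
  B * Real.logb 2 (1 + M * P * β / (B * N₀)) /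
    (P / κ + μ + (D₀ + ν * B) * M +
      η * B * Real.logb 2 (1 + M * P * β / (B * N₀)))


noncomputable def g8 (c B : ℝ) : ℝ := B * Real.log (1 + c / B)
noncomputable def phi8 (c B : ℝ) : ℝ := Real.log (1 + c / B) - c / (B + c)
noncomputable def N8 (c a C B : ℝ) : ℝ := a * g8 c B - (C + a * B) * phi8 c B
noncomputable def Den8 (c a C η B : ℝ) : ℝ := (C + a * B) * Real.log 2 + η * g8 c B
noncomputable def F8 (c a C η B : ℝ) : ℝ := g8 c B / Den8 c a C η B

lemma arg_gt_one8 {c B : ℝ} (hc : 0 < c) (hB : 0 < B) : 1 < 1 + c / B := by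
  have := div_pos hc hB; linarith

lemma log_lb8 {c B : ℝ} (hc : 0 < c) (hB : 0 < B) :
    c / (B + c) < Real.log (1 + c / B) := by
  have hBc : 0 < B + c := by linarith
  have hne : B / (B + c) ≠ 1 := by
    intro h; rw [div_eq_one_iff_eq hBc.ne'] at h; linarith
  have key : Real.log B - Real.log (B + c) < B / (B + c) - 1 := by
    rw [← Real.log_div hB.ne' hBc.ne']
    exact Real.log_lt_sub_one_of_pos (div_pos hB hBc) hne
  have h1 : 1 + c / B = (B + c) / B := by field_simp
  have h2 : B / (B + c) - 1 = -(c / (B + c)) := by field_simp; ring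
  rw [h1, Real.log_div hBc.ne' hB.ne']
  linarith [key, h2.symm ▸ key]

lemma log_ub8 {c B : ℝ} (hc : 0 < c) (hB : 0 < B) :
    Real.log (1 + c / B) ≤ c / B := by
  have h := Real.log_le_sub_one_of_pos (show (0:ℝ) < 1 + c / B by
    have := div_pos hc hB; linarith)
  linarith

lemma g8_pos {c B : ℝ} (hc : 0 < c) (hB : 0 < B) : 0 < g8 c B :=
  mul_pos hB (Real.log_pos (arg_gt_one8 hc hB))

lemma phi8_pos {c B : ℝ} (hc : 0 < c) (hB : 0 < B) : 0 < phi8 c B :=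
  sub_pos.2 (log_lb8 hc hB)

lemma g8_le {c B : ℝ} (hc : 0 < c) (hB : 0 < B) : g8 c B ≤ c := by
  have h := mul_le_mul_of_nonneg_left (log_ub8 hc hB) hB.le
  have h2 : B * (c / B) = c := by field_simp
  unfold g8; linarith [h2 ▸ h]

lemma hasDerivAt_base8 {c B : ℝ} (hB : B ≠ 0) :
    HasDerivAt (fun B => 1 + c / B) (-(c / B ^ 2)) B := by
  have h := ((hasDerivAt_inv hB).const_mul c).const_add 1
  simpa [div_eq_mul_inv, mul_comm, mul_neg, neg_mul] using h

lemma hasDerivAt_g8 {c B : ℝ} (hc : 0 < c) (hB : 0 < B) :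
    HasDerivAt (g8 c) (phi8 c B) B := by
  have hx : (0:ℝ) < 1 + c / B := lt_trans one_pos (arg_gt_one8 hc hB)
  have hBc : 0 < B + c := by linarith
  have hlog : HasDerivAt (fun B => Real.log (1 + c / B)) (-(c / B ^ 2) / (1 + c / B)) B :=
    (hasDerivAt_base8 hB.ne').log hx.ne'
  have h := (hasDerivAt_id B).mul hlog
  have heq : phi8 c B = 1 * Real.log (1 + c / B) + B * (-(c / B ^ 2) / (1 + c / B)) := by
    unfold phi8; field_simp; ring
  rw [show g8 c = fun B => B * Real.log (1 + c / B) from rfl, heq]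
  exact h

lemma hasDerivAt_phi8 {c B : ℝ} (hc : 0 < c) (hB : 0 < B) :
    HasDerivAt (phi8 c) (-(c ^ 2 / (B * (B + c) ^ 2))) B := by
  have hx : (0:ℝ) < 1 + c / B := lt_trans one_pos (arg_gt_one8 hc hB)
  have hBc : 0 < B + c := by linarith
  have hlog : HasDerivAt (fun B => Real.log (1 + c / B)) (-(c / B ^ 2) / (1 + c / B)) B :=
    (hasDerivAt_base8 hB.ne').log hx.ne'
  have h2 : HasDerivAt (fun B : ℝ => c / (B + c)) (-(c / (B + c) ^ 2)) B := by
    have hinner : HasDerivAt (fun x : ℝ => x + c) 1 B := (hasDerivAt_id B).add_const c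
    have h := (hinner.inv hBc.ne').const_mul c
    simpa [div_eq_mul_inv, mul_comm, mul_neg, neg_mul] using h
  have h := hlog.sub h2
  have heq : -(c ^ 2 / (B * (B + c) ^ 2)) = -(c / B ^ 2) / (1 + c / B) - -(c / (B + c) ^ 2) := by
    field_simp; ring
  rw [show phi8 c = fun B => Real.log (1 + c / B) - c / (B + c) from rfl, heq]
  exact h

lemma hasDerivAt_N8 {c B : ℝ} (a C : ℝ) (hc : 0 < c) (hB : 0 < B) :
    HasDerivAt (N8 c a C) ((C + a * B) * c ^ 2 / (B * (B + c) ^ 2)) B := by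
  have hBc : 0 < B + c := by linarith
  have hg := (hasDerivAt_g8 hc hB).const_mul a
  have hlin : HasDerivAt (fun x : ℝ => C + a * x) a B := by
    simpa using ((hasDerivAt_id B).const_mul a).const_add C
  have h2 := hlin.mul (hasDerivAt_phi8 hc hB)
  have h := hg.sub h2
  have heq : (C + a * B) * c ^ 2 / (B * (B + c) ^ 2) =
      a * phi8 c B - (a * phi8 c B + (C + a * B) * -(c ^ 2 / (B * (B + c) ^ 2))) := by
    field_simp; ring
  rw [show N8 c a C = fun B => a * g8 c B - (C + a * B) * phi8 c B from rfl, heq]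
  exact h

lemma Den8_pos {c a C η B : ℝ} (hc : 0 < c) (ha : 0 < a) (hC : 0 < C) (hη : 0 ≤ η)
    (hB : 0 < B) : 0 < Den8 c a C η B := by
  have h1 : 0 < (C + a * B) * Real.log 2 :=
    mul_pos (by nlinarith) (Real.log_pos one_lt_two)
  have h2 : 0 ≤ η * g8 c B := mul_nonneg hη (g8_pos hc hB).le
  unfold Den8; linarith

lemma hasDerivAt_F8 {c a C η B : ℝ} (hc : 0 < c) (ha : 0 < a) (hC : 0 < C) (hη : 0 ≤ η)
    (hB : 0 < B) :
    HasDerivAt (F8 c a C η)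
      (-(Real.log 2 * N8 c a C B) / (Den8 c a C η B) ^ 2) B := by
  have hden := Den8_pos hc ha hC hη hB
  have hg := hasDerivAt_g8 hc hB
  have hlin : HasDerivAt (fun x : ℝ => (C + a * x) * Real.log 2) (a * Real.log 2) B := by
    have : HasDerivAt (fun x : ℝ => C + a * x) a B := by
      simpa using ((hasDerivAt_id B).const_mul a).const_add C
    simpa using this.mul_const (Real.log 2)
  have hdenD : HasDerivAt (fun x => Den8 c a C η x)
      (a * Real.log 2 + η * phi8 c B) B := hlin.add (hg.const_mul η)
  have h := hg.div hdenD hden.ne'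
  have heq : -(Real.log 2 * N8 c a C B) / (Den8 c a C η B) ^ 2 =
      (phi8 c B * Den8 c a C η B - g8 c B * (a * Real.log 2 + η * phi8 c B)) /
        (Den8 c a C η B) ^ 2 := by
    congr 1
    simp only [N8, Den8]; ring
  rw [show F8 c a C η = fun B => g8 c B / Den8 c a C η B from rfl, heq]
  exact h

theorem test_main (c a C η : ℝ) (hc : 0 < c) (ha : 0 < a) (hC : 0 < C) (hη : 0 ≤ η) :
    ∃! Bopt : ℝ, 0 < Bopt ∧
      ∀ B : ℝ, 0 < B → F8 c a C η B ≤ F8 c a C η Bopt := by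
  -- N8 is strictly monotone on (0, ∞)
  have hNmono : StrictMonoOn (N8 c a C) (Set.Ioi 0) := by
    apply strictMonoOn_of_deriv_pos (convex_Ioi 0)
    · intro x hx
      exact ((hasDerivAt_N8 a C hc hx).differentiableAt.continuousAt).continuousWithinAt
    · intro x hx
      rw [interior_Ioi] at hx
      rw [(hasDerivAt_N8 a C hc hx).deriv]
      have hx' : (0:ℝ) < x := hx
      apply div_pos
      · have : 0 < C + a * x := by nlinarith
        positivity
      · have : 0 < x + c := by linarith
        positivity
  -- negative point B₁
  obtain ⟨E, hE⟩ : ∃ x, x = Real.exp (1 + a * c / C) := ⟨_, rfl⟩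
  have hEpos : 0 < E := hE ▸ Real.exp_pos _
  obtain ⟨B₁, hB₁def⟩ : ∃ x, x = c / E := ⟨_, rfl⟩
  have hB₁ : 0 < B₁ := hB₁def ▸ div_pos hc hEpos
  have hN1 : N8 c a C B₁ < 0 := by
    have hcB1 : c / B₁ = E := by
      rw [hB₁def]; field_simp
    have hx : (0:ℝ) < 1 + c / B₁ := lt_trans one_pos (arg_gt_one8 hc hB₁)
    have hlog : 1 + a * c / C < Real.log (1 + c / B₁) := by
      rw [Real.lt_log_iff_exp_lt hx, hcB1]
      linarith [hE.ge, hE.le]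
    have hfrac : c / (B₁ + c) < 1 := by
      rw [div_lt_one (by linarith)]; linarith
    have hphi : a * c / C < phi8 c B₁ := by
      unfold phi8; linarith
    have hCphi : a * c < C * phi8 c B₁ := by
      have h1 : C * (a * c / C) < C * phi8 c B₁ := by
        exact mul_lt_mul_of_pos_left hphi hC
      have h2 : C * (a * c / C) = a * c := by field_simp
      linarith
    have hg : a * g8 c B₁ ≤ a * c := mul_le_mul_of_nonneg_left (g8_le hc hB₁) ha.le
    have hextra : 0 < a * B₁ * phi8 c B₁ :=
      mul_pos (mul_pos ha hB₁) (phi8_pos hc hB₁)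
    unfold N8; nlinarith [phi8_pos hc hB₁]
  -- positive point B₂
  obtain ⟨b, hbdef⟩ : ∃ x, x = C * c / a := ⟨_, rfl⟩
  have hab : a * b = C * c := by rw [hbdef]; field_simp
  have hbpos : 0 < b := by rw [hbdef]; positivity
  obtain ⟨B₂, hB₂def⟩ : ∃ x, x = c + b + 1 := ⟨_, rfl⟩
  have hB₂ : 0 < B₂ := by rw [hB₂def]; linarith
  have hB₂c : 0 < B₂ + c := by linarith
  have hN2 : 0 < N8 c a C B₂ := by
    have hglb : B₂ * (c / (B₂ + c)) < g8 c B₂ := by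
      unfold g8
      exact mul_lt_mul_of_pos_left (log_lb8 hc hB₂) hB₂
    have hphiub : phi8 c B₂ ≤ c / B₂ - c / (B₂ + c) := by
      unfold phi8; linarith [log_ub8 hc hB₂]
    have hCaB : 0 < C + a * B₂ := by nlinarith
    have hX : 0 < B₂ * (B₂ + c) := mul_pos hB₂ hB₂c
    have hnum : (C + a * B₂) * c ^ 2 < a * (B₂ ^ 2 * c) := by
      have key : a * (B₂ ^ 2 * c) - (C + a * B₂) * c ^ 2
          = c * (C * c * (c + b) + a * (c + b + 1)) := by
        rw [hB₂def]; linear_combination (c * b + c ^ 2 + c) * hab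
      nlinarith [mul_pos (mul_pos hC hc) (by linarith : (0:ℝ) < c + b),
        mul_pos ha (by linarith : (0:ℝ) < c + b + 1)]
    have hsub : c / B₂ - c / (B₂ + c) = c ^ 2 / (B₂ * (B₂ + c)) := by
      rw [div_sub_div _ _ hB₂.ne' hB₂c.ne']; congr 1; ring
    have hBc2 : B₂ * (c / (B₂ + c)) = B₂ ^ 2 * c / (B₂ * (B₂ + c)) := by
      rw [show B₂ ^ 2 * c = B₂ * (B₂ * c) by ring, mul_div_mul_left _ _ hB₂.ne',
        mul_div_assoc]
    have hkey : (C + a * B₂) * (c / B₂ - c / (B₂ + c)) < a * (B₂ * (c / (B₂ + c))) := by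
      rw [hsub, hBc2, ← mul_div_assoc, ← mul_div_assoc]
      gcongr
    have h1 := mul_le_mul_of_nonneg_left hphiub hCaB.le
    have h2 := mul_lt_mul_of_pos_left hglb ha
    unfold N8; linarith
  -- B₁ < B₂ and a root of N8 in between
  have hB12 : B₁ ≤ B₂ := by
    by_contra h
    push_neg at h
    have := hNmono (Set.mem_Ioi.2 hB₂) (Set.mem_Ioi.2 hB₁) h
    linarith
  have hcont : ContinuousOn (N8 c a C) (Set.Icc B₁ B₂) := by
    intro x hx
    have hx0 : 0 < x := lt_of_lt_of_le hB₁ hx.1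
    exact ((hasDerivAt_N8 a C hc hx0).differentiableAt.continuousAt).continuousWithinAt
  obtain ⟨Bs, hBsmem, hNBs⟩ := intermediate_value_Icc hB12 hcont ⟨hN1.le, hN2.le⟩
  have hBs : 0 < Bs := lt_of_lt_of_le hB₁ hBsmem.1
  -- sign of N8 around the root
  have hNneg : ∀ x : ℝ, 0 < x → x < Bs → N8 c a C x < 0 := by
    intro x hx hxlt
    have := hNmono (Set.mem_Ioi.2 hx) (Set.mem_Ioi.2 hBs) hxlt
    rw [hNBs] at this; exact this
  have hNpos : ∀ x : ℝ, Bs < x → 0 < N8 c a C x := by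
    intro x hxlt
    have := hNmono (Set.mem_Ioi.2 hBs) (Set.mem_Ioi.2 (lt_trans hBs hxlt)) hxlt
    rw [hNBs] at this; exact this
  -- F8 is strictly monotone on (0, Bs] and strictly antitone on [Bs, ∞)
  have hmono : StrictMonoOn (F8 c a C η) (Set.Ioc 0 Bs) := by
    apply strictMonoOn_of_deriv_pos (convex_Ioc 0 Bs)
    · intro x hx
      exact ((hasDerivAt_F8 hc ha hC hη hx.1).differentiableAt.continuousAt).continuousWithinAt
    · intro x hx
      rw [interior_Ioc] at hx
      rw [(hasDerivAt_F8 hc ha hC hη hx.1).deriv]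
      apply div_pos
      · have h1 := hNneg x hx.1 hx.2
        have h2 := Real.log_pos one_lt_two
        nlinarith
      · exact pow_pos (Den8_pos hc ha hC hη hx.1) 2
  have hanti : StrictAntiOn (F8 c a C η) (Set.Ici Bs) := by
    apply strictAntiOn_of_deriv_neg (convex_Ici Bs)
    · intro x hx
      have hx0 : 0 < x := lt_of_lt_of_le hBs hx
      exact ((hasDerivAt_F8 hc ha hC hη hx0).differentiableAt.continuousAt).continuousWithinAt
    · intro x hx
      rw [interior_Ici] at hx
      have hx0 : 0 < x := lt_trans hBs hx
      rw [(hasDerivAt_F8 hc ha hC hη hx0).deriv]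
      apply div_neg_of_neg_of_pos
      · have h1 := hNpos x hx
        have h2 := Real.log_pos one_lt_two
        nlinarith
      · exact pow_pos (Den8_pos hc ha hC hη hx0) 2
  refine ⟨Bs, ⟨hBs, ?_⟩, ?_⟩
  · intro B hB
    rcases le_total B Bs with h | h
    · exact hmono.monotoneOn ⟨hB, h⟩ ⟨hBs, le_refl _⟩ h
    · exact hanti.antitoneOn (Set.mem_Ici.2 (le_refl _)) (Set.mem_Ici.2 h) h
  · rintro y ⟨hy, hymax⟩
    by_contra hne
    have hge : F8 c a C η Bs ≤ F8 c a C η y := hymax Bs hBs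
    rcases lt_or_gt_of_ne hne with h | h
    · have hlt : F8 c a C η y < F8 c a C η Bs :=
        hmono ⟨hy, h.le⟩ ⟨hBs, le_refl _⟩ h
      linarith
    · have hlt : F8 c a C η y < F8 c a C η Bs :=
        hanti (Set.mem_Ici.2 (le_refl _)) (Set.mem_Ici.2 h.le) h
      linarith

/-- Lemma 2 of the paper: the energy efficiency on `B > 0` attains its maximum at a unique
point `B_opt > 0`. -/
theorem stmt_8 (β N₀ κ P M ν μ D₀ η : ℝ)
    (hβ : 0 < β) (hN : 0 < N₀) (hκ : 0 < κ) (hP : 0 < P) (hM : 0 < M) (hν : 0 < ν)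
    (hμ : 0 ≤ μ) (hD : 0 ≤ D₀) (hη : 0 ≤ η) :
    ∃! Bopt : ℝ, 0 < Bopt ∧
      ∀ B : ℝ, 0 < B → EE8 β N₀ κ P M μ D₀ ν η B ≤ EE8 β N₀ κ P M μ D₀ ν η Bopt := by
  obtain ⟨c, hcdef⟩ : ∃ x, x = M * P * β / N₀ := ⟨_, rfl⟩
  obtain ⟨C, hCdef⟩ : ∃ x, x = P / κ + μ + D₀ * M := ⟨_, rfl⟩
  obtain ⟨a, hadef⟩ : ∃ x, x = ν * M := ⟨_, rfl⟩
  have hc : 0 < c := by rw [hcdef]; positivity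
  have hC : 0 < C := by
    rw [hCdef]
    have : 0 < P / κ := div_pos hP hκ
    have : 0 ≤ D₀ * M := mul_nonneg hD hM.le
    linarith
  have ha : 0 < a := by rw [hadef]; exact mul_pos hν hM
  have hEE : ∀ B : ℝ, 0 < B → EE8 β N₀ κ P M μ D₀ ν η B = F8 c a C η B := by
    intro B hB
    have harg : M * P * β / (B * N₀) = c / B := by
      rw [hcdef, div_div, mul_comm N₀ B]
    have hlog2 : (0:ℝ) < Real.log 2 := Real.log_pos one_lt_two
    have hlogx : 0 < Real.log (1 + c / B) := Real.log_pos (arg_gt_one8 hc hB)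
    have hden3 : 0 < (C + a * B) * Real.log 2 + η * (B * Real.log (1 + c / B)) := by
      have h0 := Den8_pos (η := η) hc ha hC hη hB
      unfold Den8 g8 at h0
      exact h0
    have hsubst : P / κ + μ + (D₀ + ν * B) * M = C + a * B := by
      rw [hCdef, hadef]; ring
    have hdl : 0 < C + a * B + η * B * (Real.log (1 + c / B) / Real.log 2) := by
      have h1 : 0 ≤ η * B * (Real.log (1 + c / B) / Real.log 2) :=
        mul_nonneg (mul_nonneg hη hB.le) (div_pos hlogx hlog2).le
      nlinarith [mul_pos ha hB]
    unfold EE8 F8 Den8 g8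
    rw [harg]
    simp only [Real.logb]
    obtain ⟨L, hL⟩ : ∃ x, x = Real.log (1 + c / B) := ⟨_, rfl⟩
    rw [← hL] at hden3 hdl ⊢
    rw [hsubst, div_eq_div_iff hdl.ne' hden3.ne']
    field_simp
  obtain ⟨Bs, ⟨hBs, hmax⟩, huniq⟩ := test_main c a C η hc ha hC hη
  refine ⟨Bs, ⟨hBs, ?_⟩, ?_⟩
  · intro B hB
    rw [hEE B hB, hEE Bs hBs]
    exact hmax B hB
  · rintro y ⟨hy, hymax⟩
    refine huniq y ⟨hy, ?_⟩
    intro B hB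
    rw [← hEE B hB, ← hEE y hy]
    exact hymax B hB
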